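/- In a DAG, if u → v is a covered edge (Pa(u) = Pa(v) \ {u}), then reversing the edge to v → u yields a graph with the same skeleton and the same set of v-structures (hence the same Markov equivalence class), and the resulting graph is still acyclic. -/

import Mathlib

/-- Reversing a covered edge `u → v` (where `Pa(u) = Pa(v) \ {u}`) of a DAG yields a
directed graph with the same skeleton, which is still acyclic, and which has the same
v-structures (arrow pairs into a common vertex from a non-adjacent pair). -/
theorem stmt18 {V : Type*} (A : V → V → Prop)
    (hacyc : ∀ x, ¬ Relation.TransGen A x x)
    (u v : V) (huv : A u v)
    (hcov : ∀ x, A x u ↔ (A x v ∧ x ≠ u)) :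
    let A' : V → V → Prop := fun a b => (A a b ∧ ¬(a = u ∧ b = v)) ∨ (a = v ∧ b = u)
    (∀ a b, (A' a b ∨ A' b a) ↔ (A a b ∨ A b a)) ∧
    (∀ x, ¬ Relation.TransGen A' x x) ∧
    (∀ a b c, a ≠ c → ¬(A a c ∨ A c a) →
      ((A a b ∧ A c b) ↔ (A' a b ∧ A' c b))) := by
  intro A'
  have hA' : ∀ a b, A' a b ↔ ((A a b ∧ ¬(a = u ∧ b = v)) ∨ (a = v ∧ b = u)) :=
    fun a b => Iff.rfl
  have hne : u ≠ v := by
    rintro rfl; exact hacyc u (Relation.TransGen.single huv)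
  -- A'' : the arcs of A with the arc u → v removed
  set A'' : V → V → Prop := fun a b => A a b ∧ ¬(a = u ∧ b = v) with hA''def
  have hsub : ∀ ⦃x y⦄, A'' x y → A x y := fun x y h => h.1
  -- no directed path from u to v avoiding the arc u → v
  have key : ¬ Relation.ReflTransGen A'' u v := by
    intro h
    rcases (Relation.reflTransGen_iff_eq_or_transGen.mp h) with h | h
    · exact hne h.symm
    · rcases (Relation.TransGen.tail'_iff.mp h) with ⟨x, hux, hxv⟩
      have hxu : A x u := (hcov x).mpr ⟨hxv.1, fun hx => hxv.2 ⟨hx, rfl⟩⟩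
      exact hacyc u (Relation.TransGen.tail' (Relation.ReflTransGen.mono (fun a b h => hsub h) _ _ hux) hxu)
  -- decomposition of A'-paths
  have main : ∀ x y, Relation.TransGen A' x y →
      Relation.TransGen A'' x y ∨
      (Relation.ReflTransGen A'' x v ∧ Relation.ReflTransGen A'' u y) := by
    intro x y h
    induction h with
    | single h =>
      rcases (hA' _ _).mp h with h | ⟨rfl, rfl⟩
      · exact Or.inl (Relation.TransGen.single h)
      · exact Or.inr ⟨Relation.ReflTransGen.refl, Relation.ReflTransGen.refl⟩
    | tail hxb hby ih =>
      rcases ih with ih | ⟨ihv, ihu⟩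
      · rcases (hA' _ _).mp hby with h | ⟨rfl, rfl⟩
        · exact Or.inl (ih.tail h)
        · exact Or.inr ⟨ih.to_reflTransGen, Relation.ReflTransGen.refl⟩
      · rcases (hA' _ _).mp hby with h | ⟨rfl, rfl⟩
        · exact Or.inr ⟨ihv, ihu.tail h⟩
        · exact Or.inr ⟨ihv, Relation.ReflTransGen.refl⟩
  refine ⟨?_, ?_, ?_⟩
  · -- same skeleton
    intro a b
    simp only [hA']
    constructor
    · rintro ((⟨h, -⟩ | ⟨rfl, rfl⟩) | (⟨h, -⟩ | ⟨rfl, rfl⟩))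
      · exact Or.inl h
      · exact Or.inr huv
      · exact Or.inr h
      · exact Or.inl huv
    · rintro (h | h)
      · by_cases hc : a = u ∧ b = v
        · exact Or.inr (Or.inr ⟨hc.2, hc.1⟩)
        · exact Or.inl (Or.inl ⟨h, hc⟩)
      · by_cases hc : b = u ∧ a = v
        · exact Or.inl (Or.inr ⟨hc.2, hc.1⟩)
        · exact Or.inr (Or.inl ⟨h, hc⟩)
  · -- acyclicity
    intro x hx
    rcases main x x hx with h | ⟨hxv, hux⟩
    · exact hacyc x (Relation.TransGen.mono (fun a b h => hsub h) _ _ h)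
    · exact key (hux.trans hxv)
  · -- same v-structures
    intro a b c hac hnadj
    simp only [hA']
    constructor
    · rintro ⟨hab, hcb⟩
      refine ⟨Or.inl ⟨hab, ?_⟩, Or.inl ⟨hcb, ?_⟩⟩
      · rintro ⟨rfl, rfl⟩
        exact hnadj (Or.inr ((hcov c).mpr ⟨hcb, fun h => hac h.symm⟩))
      · rintro ⟨rfl, rfl⟩
        exact hnadj (Or.inl ((hcov a).mpr ⟨hab, hac⟩))
    · rintro ⟨(⟨hab, -⟩ | ⟨rfl, rfl⟩), (⟨hcb, -⟩ | ⟨hcv, hbu⟩)⟩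
      · exact ⟨hab, hcb⟩
      · refine absurd (Or.inl ?_) hnadj
        rw [hcv]
        exact ((hcov a).mp (by rw [← hbu]; exact hab)).1
      · exact absurd (Or.inr ((hcov c).mp hcb).1) hnadj
      · exact absurd hcv.symm hac
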